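/- For every invertible 2×2 real matrix g and all nonzero vectors u, v ∈ ℝ²: |log(‖gu‖/‖u‖) − log(‖gv‖/‖v‖)| ≤ (‖g‖·‖g⁻¹‖ + 1)·d(u, v). -/

import Mathlib

open scoped RealInnerProductSpace


noncomputable section

/-- The Euclidean plane `ℝ²`. -/
abbrev E2 : Type := EuclideanSpace ℝ (Fin 2)

/-- The group of invertible continuous linear maps of `ℝ²` (invertible 2×2 real matrices,
with the operator norm induced by the Euclidean norm). -/
abbrev GL2 : Type := (E2 →L[ℝ] E2)ˣ

/-- The projective (sine-of-angle) distance
`d(u, v) = |u₁v₂ − u₂v₁| / (‖u‖·‖v‖)` between the lines spanned by nonzero `u, v ∈ ℝ²`. -/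
def projDist (u v : E2) : ℝ :=
  |u 0 * v 1 - u 1 * v 0| / (‖u‖ * ‖v‖)

lemma inner_formula (u v : E2) : ⟪u, v⟫ = u 0 * v 0 + u 1 * v 1 := by
  simp [PiLp.inner_apply, Fin.sum_univ_two, RCLike.inner_apply, conj_trivial]
  ring

lemma normsq_formula (u : E2) : ‖u‖^2 = u 0^2 + u 1^2 := by
  rw [← real_inner_self_eq_norm_sq, inner_formula]; ring

lemma key (g : E2 →L[ℝ] E2) (u v : E2) (hu : ‖u‖ = 1) (hv : ‖v‖ = 1) :
    ‖g v‖ ≤ ‖g u‖ + ‖g‖ * |u 0 * v 1 - u 1 * v 0| := by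
  set c : ℝ := ⟪u, v⟫ with hc
  have hcle : |c| ≤ 1 := by
    have := abs_real_inner_le_norm u v
    rw [hu, hv] at this
    rw [hc]
    simpa using this
  have hw : ‖v - c • u‖ = |u 0 * v 1 - u 1 * v 0| := by
    have h1 : ‖v - c • u‖^2 = (u 0 * v 1 - u 1 * v 0)^2 := by
      have e1 := normsq_formula u
      have e2 := normsq_formula v
      have e3 := normsq_formula (v - c • u)
      have e4 : (v - c • u) 0 = v 0 - c * u 0 := by
        simp [PiLp.sub_apply, PiLp.smul_apply, smul_eq_mul]
      have e5 : (v - c • u) 1 = v 1 - c * u 1 := by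
        simp [PiLp.sub_apply, PiLp.smul_apply, smul_eq_mul]
      rw [e3, e4, e5, hc, inner_formula]
      rw [hu] at e1; rw [hv] at e2
      linear_combination ((v 0^2 + v 1^2) - (u 0*v 0 + u 1*v 1)^2) * e1
    calc ‖v - c • u‖ = √(‖v - c • u‖^2) := (Real.sqrt_sq (norm_nonneg _)).symm
    _ = √((u 0 * v 1 - u 1 * v 0)^2) := by rw [h1]
    _ = |u 0 * v 1 - u 1 * v 0| := Real.sqrt_sq_eq_abs _
  have hdecomp : g v = c • g u + g (v - c • u) := by
    rw [map_sub, map_smul]; abel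
  calc ‖g v‖ = ‖c • g u + g (v - c • u)‖ := by rw [← hdecomp]
  _ ≤ ‖c • g u‖ + ‖g (v - c • u)‖ := norm_add_le _ _
  _ ≤ ‖g u‖ + ‖g‖ * |u 0 * v 1 - u 1 * v 0| := by
      gcongr ?_ + ?_
      · rw [norm_smul, Real.norm_eq_abs]
        calc |c| * ‖g u‖ ≤ 1 * ‖g u‖ := by gcongr
        _ = ‖g u‖ := one_mul _
      · calc ‖g (v - c • u)‖ ≤ ‖g‖ * ‖v - c • u‖ := g.le_opNorm _
        _ = ‖g‖ * |u 0 * v 1 - u 1 * v 0| := by rw [hw]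

lemma logle (g : GL2) (u v : E2) (hu : ‖u‖ = 1) (hv : ‖v‖ = 1) :
    Real.log ‖(g : E2 →L[ℝ] E2) v‖ - Real.log ‖(g : E2 →L[ℝ] E2) u‖ ≤
      ‖(g : E2 →L[ℝ] E2)‖ * ‖((g⁻¹ : GL2) : E2 →L[ℝ] E2)‖ * |u 0 * v 1 - u 1 * v 0| := by
  set G : E2 →L[ℝ] E2 := (g : E2 →L[ℝ] E2) with hG
  set Gi : E2 →L[ℝ] E2 := ((g⁻¹ : GL2) : E2 →L[ℝ] E2) with hGi
  have hrec : ∀ x : E2, Gi (G x) = x := by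
    intro x
    have h : (Gi * G : E2 →L[ℝ] E2) = 1 := g.inv_mul
    have := congrArg (fun f : E2 →L[ℝ] E2 => f x) h
    simpa [ContinuousLinearMap.mul_apply] using this
  have hlow : ∀ x : E2, ‖x‖ ≤ ‖Gi‖ * ‖G x‖ := fun x => by
    calc ‖x‖ = ‖Gi (G x)‖ := by rw [hrec]
    _ ≤ ‖Gi‖ * ‖G x‖ := Gi.le_opNorm _
  have h1u : (1:ℝ) ≤ ‖Gi‖ * ‖G u‖ := by simpa [hu] using hlow u
  have h1v : (1:ℝ) ≤ ‖Gi‖ * ‖G v‖ := by simpa [hv] using hlow v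
  have ha : (0:ℝ) < ‖G u‖ := by nlinarith [norm_nonneg (G u), norm_nonneg Gi]
  have hb : (0:ℝ) < ‖G v‖ := by nlinarith [norm_nonneg (G v), norm_nonneg Gi]
  have hkey := key G u v hu hv
  have hs : 0 ≤ |u 0 * v 1 - u 1 * v 0| := abs_nonneg _
  rw [← Real.log_div hb.ne' ha.ne']
  have h2 : Real.log (‖G v‖ / ‖G u‖) ≤ ‖G v‖ / ‖G u‖ - 1 :=
    Real.log_le_sub_one_of_pos (div_pos hb ha)
  have h3 : ‖G v‖ / ‖G u‖ - 1 ≤ ‖G‖ * ‖Gi‖ * |u 0 * v 1 - u 1 * v 0| := by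
    rw [div_sub_one ha.ne', div_le_iff₀ ha]
    nlinarith [norm_nonneg G, mul_nonneg (mul_nonneg (norm_nonneg G) hs) (sub_nonneg.mpr h1u)]
  linarith

/-- for every invertible `g` and all nonzero `u, v ∈ ℝ²`:
`|log(‖gu‖/‖u‖) − log(‖gv‖/‖v‖)| ≤ (‖g‖·‖g⁻¹‖ + 1)·d(u, v)`. -/
theorem stmt5 (g : GL2) (u v : E2) (hu : u ≠ 0) (hv : v ≠ 0) :
    |Real.log (‖(g : E2 →L[ℝ] E2) u‖ / ‖u‖) - Real.log (‖(g : E2 →L[ℝ] E2) v‖ / ‖v‖)| ≤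
      (‖(g : E2 →L[ℝ] E2)‖ * ‖((g⁻¹ : GL2) : E2 →L[ℝ] E2)‖ + 1) * projDist u v := by
  set G : E2 →L[ℝ] E2 := (g : E2 →L[ℝ] E2) with hG
  have hun : (0:ℝ) < ‖u‖ := norm_pos_iff.mpr hu
  have hvn : (0:ℝ) < ‖v‖ := norm_pos_iff.mpr hv
  set u' : E2 := ‖u‖⁻¹ • u with hu'
  set v' : E2 := ‖v‖⁻¹ • v with hv'
  have hu1 : ‖u'‖ = 1 := by
    rw [hu', norm_smul, Real.norm_eq_abs, abs_inv, abs_of_pos hun, inv_mul_cancel₀ hun.ne']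
  have hv1 : ‖v'‖ = 1 := by
    rw [hv', norm_smul, Real.norm_eq_abs, abs_inv, abs_of_pos hvn, inv_mul_cancel₀ hvn.ne']
  have hgu : ‖G u‖ / ‖u‖ = ‖G u'‖ := by
    rw [hu', map_smul, norm_smul, Real.norm_eq_abs, abs_inv, abs_of_pos hun]
    rw [div_eq_inv_mul]
  have hgv : ‖G v‖ / ‖v‖ = ‖G v'‖ := by
    rw [hv', map_smul, norm_smul, Real.norm_eq_abs, abs_inv, abs_of_pos hvn]
    rw [div_eq_inv_mul]
  have hpd : projDist u v = |u' 0 * v' 1 - u' 1 * v' 0| := by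
    have e0 : ∀ i, u' i = ‖u‖⁻¹ * u i := fun i => by simp [hu', PiLp.smul_apply, smul_eq_mul]
    have e1 : ∀ i, v' i = ‖v‖⁻¹ * v i := fun i => by simp [hv', PiLp.smul_apply, smul_eq_mul]
    rw [projDist, e0 0, e0 1, e1 0, e1 1]
    rw [show ‖u‖⁻¹ * u 0 * (‖v‖⁻¹ * v 1) - ‖u‖⁻¹ * u 1 * (‖v‖⁻¹ * v 0)
        = ‖u‖⁻¹ * ‖v‖⁻¹ * (u 0 * v 1 - u 1 * v 0) by ring]
    rw [abs_mul, abs_mul, abs_inv, abs_inv, abs_of_pos hun, abs_of_pos hvn]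
    field_simp
  rw [hgu, hgv, hpd]
  have hsym : |v' 0 * u' 1 - v' 1 * u' 0| = |u' 0 * v' 1 - u' 1 * v' 0| := by
    rw [← abs_neg]; ring_nf
  have h1 := logle g u' v' hu1 hv1
  have h2 := logle g v' u' hv1 hu1
  rw [hsym] at h2
  have hs : 0 ≤ |u' 0 * v' 1 - u' 1 * v' 0| := abs_nonneg _
  have hκ : 0 ≤ ‖G‖ * ‖((g⁻¹ : GL2) : E2 →L[ℝ] E2)‖ :=
    mul_nonneg (norm_nonneg _) (norm_nonneg _)
  rw [abs_sub_le_iff]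
  constructor <;> nlinarith
end
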